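/- Let ε, η, K₀, D̄, β_K be positive real constants, let J₀ be a real symmetric positive-definite 3×3 matrix with largest eigenvalue λ_max, let K* > D̄, and let γ satisfy 0 < γ < η·K₀/(β_K + ε). Let d̄ : ℝ → ℝ³ satisfy ‖d̄(t)‖₂ < D̄ for all t, let K : ℝ → ℝ be differentiable with K(0) ≥ K₀, K(t) ≤ K* for all t ≥ 0, and K'(t) = η·(‖u(t)‖₂ − K(t) + K₀) for all t ≥ 0, where u(t) := −(K(t)/ε)·s(t), and let s : ℝ → ℝ³ be differentiable with s'(t) = J₀⁻¹·u(t) + λ_max⁻¹·d̄(t). Define V(t) := (1/2)·s(t)ᵀ J₀ s(t) + (1/(2γ))·(K(t) − K*)². Then there exists a constant β > 0, depending only on ε, η, K₀, D̄, β_K, K*, γ, and λ_max, such that for every t ≥ 0 with ‖s(t)‖₂ > ε, the derivative of V satisfies V'(t) < −β·√(V(t)). -/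

import Mathlib

/-- Euclidean norm on `ℝ³`. -/
noncomputable def norm2 (x : Fin 3 → ℝ) : ℝ := Real.sqrt (∑ i, x i ^ 2)

lemma norm2_nonneg (x : Fin 3 → ℝ) : 0 ≤ norm2 x := Real.sqrt_nonneg _

lemma dot_self_eq (x : Fin 3 → ℝ) : dotProduct x x = ∑ i, x i ^ 2 := by
  simp [dotProduct, pow_two]

lemma norm2_eq_sqrt_dot (x : Fin 3 → ℝ) : norm2 x = Real.sqrt (dotProduct x x) := by
  rw [dot_self_eq]; rfl

lemma sq_norm2 (x : Fin 3 → ℝ) : norm2 x ^ 2 = dotProduct x x := by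
  rw [norm2_eq_sqrt_dot, Real.sq_sqrt]
  exact Finset.sum_nonneg fun i _ => mul_self_nonneg _

lemma norm2_smul (c : ℝ) (x : Fin 3 → ℝ) : norm2 (c • x) = |c| * norm2 x := by
  unfold norm2
  rw [show (∑ i, (c • x) i ^ 2) = c ^ 2 * ∑ i, x i ^ 2 by
    simp [Finset.mul_sum, mul_pow]]
  rw [Real.sqrt_mul (sq_nonneg c), Real.sqrt_sq_eq_abs]

lemma symm_dot (J₀ : Matrix (Fin 3) (Fin 3) ℝ) (hsymm : J₀.IsSymm) (x y : Fin 3 → ℝ) :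
    dotProduct x (J₀.mulVec y) = dotProduct y (J₀.mulVec x) := by
  rw [Matrix.dotProduct_mulVec, ← Matrix.vecMul_transpose, hsymm.eq, dotProduct_comm]

lemma quad_nonneg (J₀ : Matrix (Fin 3) (Fin 3) ℝ) (hpd : J₀.PosDef) (x : Fin 3 → ℝ) :
    0 ≤ dotProduct x (J₀.mulVec x) := by
  simpa using hpd.posSemidef.dotProduct_mulVec_nonneg x

lemma quad_pos (J₀ : Matrix (Fin 3) (Fin 3) ℝ) (hpd : J₀.PosDef) {x : Fin 3 → ℝ} (hx : x ≠ 0) :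
    0 < dotProduct x (J₀.mulVec x) := by
  simpa using hpd.dotProduct_mulVec_pos hx

lemma dot_self_nonneg {v : Fin 3 → ℝ} : 0 ≤ dotProduct v v :=
  Finset.sum_nonneg fun i _ => mul_self_nonneg _

lemma dot_self_pos {v : Fin 3 → ℝ} (hv : v ≠ 0) : 0 < dotProduct v v := by
  have h1 : 0 ≤ dotProduct v v := Finset.sum_nonneg fun i _ => mul_self_nonneg _
  rcases h1.lt_or_eq with h | h
  · exact h
  · exfalso
    apply hv
    ext i
    have h2 : ∀ j ∈ Finset.univ, v j * v j = 0 :=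
      (Finset.sum_eq_zero_iff_of_nonneg fun j _ => mul_self_nonneg _).1 h.symm
    have := h2 i (Finset.mem_univ i)
    simpa [mul_self_eq_zero] using this

lemma quad_le (J₀ : Matrix (Fin 3) (Fin 3) ℝ) (hpd : J₀.PosDef) (lmax : ℝ)
    (hlmax : IsGreatest {μ : ℝ | Module.End.HasEigenvalue (Matrix.toLin' J₀) μ} lmax)
    (x : Fin 3 → ℝ) :
    dotProduct x (J₀.mulVec x) ≤ lmax * dotProduct x x := by
  set M : Matrix (Fin 3) (Fin 3) ℝ := lmax • (1 : Matrix (Fin 3) (Fin 3) ℝ) - J₀ with hM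
  have hermM : M.IsHermitian := by
    unfold Matrix.IsHermitian
    rw [hM, Matrix.conjTranspose_sub, Matrix.conjTranspose_smul, Matrix.conjTranspose_one,
      hpd.1.eq]
    simp
  have hev : ∀ i, 0 ≤ hermM.eigenvalues i := by
    intro i
    have hvne : (hermM.eigenvectorBasis i : Fin 3 → ℝ) ≠ 0 := by
      intro h
      exact hermM.eigenvectorBasis.orthonormal.ne_zero i (by ext j; exact congrFun h j)
    set v : Fin 3 → ℝ := (hermM.eigenvectorBasis i : Fin 3 → ℝ)
    set μ := hermM.eigenvalues i
    have hv : M.mulVec v = μ • v := hermM.mulVec_eigenvectorBasis i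
    have hJv : J₀.mulVec v = (lmax - μ) • v := by
      have h2 : M.mulVec v = lmax • v - J₀.mulVec v := by
        rw [hM, Matrix.sub_mulVec, Matrix.smul_mulVec, Matrix.one_mulVec]
      rw [h2] at hv
      have h3 : J₀.mulVec v = lmax • v - μ • v := by
        rw [← hv]; abel
      rw [h3, ← sub_smul]
    have heig : Module.End.HasEigenvalue (Matrix.toLin' J₀) (lmax - μ) := by
      apply Module.End.hasEigenvalue_of_hasEigenvector (x := v)
      constructor
      · rw [Module.End.mem_eigenspace_iff, Matrix.toLin'_apply, hJv]
      · exact hvne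
    have := hlmax.2 heig
    linarith
  have hpsd := hermM.posSemidef_iff_eigenvalues_nonneg.mpr hev
  have h4 := hpsd.dotProduct_mulVec_nonneg x
  simp only [star_trivial, hM, Matrix.sub_mulVec, Matrix.smul_mulVec, Matrix.one_mulVec,
    dotProduct_sub, dotProduct_smul, smul_eq_mul] at h4
  linarith

lemma lmax_pos (J₀ : Matrix (Fin 3) (Fin 3) ℝ) (hpd : J₀.PosDef) (lmax : ℝ)
    (hlmax : IsGreatest {μ : ℝ | Module.End.HasEigenvalue (Matrix.toLin' J₀) μ} lmax) :
    0 < lmax := by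
  obtain ⟨v, hv⟩ := hlmax.1.exists_hasEigenvector
  have hvne : v ≠ 0 := hv.2
  have hJv : J₀.mulVec v = lmax • v := by
    have := hv.apply_eq_smul
    rwa [Matrix.toLin'_apply] at this
  have h1 : 0 < dotProduct v (J₀.mulVec v) := quad_pos J₀ hpd hvne
  rw [hJv, dotProduct_smul, smul_eq_mul] at h1
  have h2 : 0 < dotProduct v v := dot_self_pos hvne
  nlinarith

lemma jcs (J₀ : Matrix (Fin 3) (Fin 3) ℝ) (hsymm : J₀.IsSymm) (hpd : J₀.PosDef)
    (x y : Fin 3 → ℝ) :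
    (dotProduct x (J₀.mulVec y)) ^ 2
      ≤ dotProduct x (J₀.mulVec x) * dotProduct y (J₀.mulVec y) := by
  by_cases hy : y = 0
  · simp [hy, Matrix.mulVec_zero]
  have hQy : 0 < dotProduct y (J₀.mulVec y) := quad_pos J₀ hpd hy
  set p := dotProduct x (J₀.mulVec y) with hp
  set c := p / dotProduct y (J₀.mulVec y) with hc
  have hexp : dotProduct (x - c • y) (J₀.mulVec (x - c • y))
      = dotProduct x (J₀.mulVec x) - 2 * c * p + c ^ 2 * dotProduct y (J₀.mulVec y) := by
    simp only [Matrix.mulVec_sub, Matrix.mulVec_smul, sub_dotProduct,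
      dotProduct_sub, smul_dotProduct, dotProduct_smul, smul_eq_mul,
      symm_dot J₀ hsymm y x, ← hp]
    ring
  have key : 0 ≤ dotProduct x (J₀.mulVec x) - 2 * c * p
      + c ^ 2 * dotProduct y (J₀.mulVec y) := hexp ▸ quad_nonneg J₀ hpd (x - c • y)
  have e1 : c * dotProduct y (J₀.mulVec y) = p := by
    rw [hc, div_mul_cancel₀ _ hQy.ne']
  have e2 : dotProduct x (J₀.mulVec x) * dotProduct y (J₀.mulVec y) - p ^ 2
      = (dotProduct x (J₀.mulVec x) - 2 * c * p
          + c ^ 2 * dotProduct y (J₀.mulVec y)) * dotProduct y (J₀.mulVec y) := by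
    rw [← e1]; ring
  nlinarith [mul_nonneg key hQy.le]

lemma cross_le (J₀ : Matrix (Fin 3) (Fin 3) ℝ) (hsymm : J₀.IsSymm) (hpd : J₀.PosDef)
    (lmax : ℝ)
    (hlmax : IsGreatest {μ : ℝ | Module.End.HasEigenvalue (Matrix.toLin' J₀) μ} lmax)
    (x y : Fin 3 → ℝ) :
    dotProduct x (J₀.mulVec y) ≤ lmax * (norm2 x * norm2 y) := by
  have hl : 0 < lmax := lmax_pos J₀ hpd lmax hlmax
  have h1 : (dotProduct x (J₀.mulVec y)) ^ 2
      ≤ (lmax * dotProduct x x) * (lmax * dotProduct y y) := by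
    calc (dotProduct x (J₀.mulVec y)) ^ 2
        ≤ dotProduct x (J₀.mulVec x) * dotProduct y (J₀.mulVec y) :=
          jcs J₀ hsymm hpd x y
      _ ≤ (lmax * dotProduct x x) * (lmax * dotProduct y y) := by
          apply mul_le_mul (quad_le J₀ hpd lmax hlmax x) (quad_le J₀ hpd lmax hlmax y)
            (quad_nonneg J₀ hpd y)
          exact mul_nonneg hl.le dot_self_nonneg
  have hdx : dotProduct x x = norm2 x ^ 2 := (sq_norm2 x).symm
  have hdy : dotProduct y y = norm2 y ^ 2 := (sq_norm2 y).symm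
  rw [hdx, hdy] at h1
  have h2 : (lmax * norm2 x ^ 2) * (lmax * norm2 y ^ 2) = (lmax * (norm2 x * norm2 y)) ^ 2 := by
    ring
  rw [h2] at h1
  have h3 := Real.sqrt_le_sqrt h1
  rw [Real.sqrt_sq_eq_abs,
    Real.sqrt_sq (mul_nonneg hl.le (mul_nonneg (norm2_nonneg x) (norm2_nonneg y)))] at h3
  exact (le_abs_self _).trans h3

lemma hasDerivAt_quad (J₀ : Matrix (Fin 3) (Fin 3) ℝ) (s : ℝ → Fin 3 → ℝ)
    (hs : Differentiable ℝ s) (t : ℝ) :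
    HasDerivAt (fun τ => dotProduct (s τ) (J₀.mulVec (s τ)))
      (dotProduct (deriv s t) (J₀.mulVec (s t))
        + dotProduct (s t) (J₀.mulVec (deriv s t))) t := by
  have hc : ∀ i, HasDerivAt (fun τ => s τ i) (deriv s t i) t := fun i =>
    hasDerivAt_pi.1 (hs t).hasDerivAt i
  have H : HasDerivAt (fun τ => ∑ i, s τ i * ∑ j, J₀ i j * s τ j)
      (∑ i, (deriv s t i * ∑ j, J₀ i j * s t j + s t i * ∑ j, J₀ i j * deriv s t j)) t := by
    apply HasDerivAt.fun_sum
    intro i _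
    exact (hc i).mul (HasDerivAt.fun_sum fun j _ => (hc j).const_mul (J₀ i j))
  have hfun : (fun τ => dotProduct (s τ) (J₀.mulVec (s τ)))
      = fun τ => ∑ i, s τ i * ∑ j, J₀ i j * s τ j := by
    funext τ
    simp [dotProduct, Matrix.mulVec]
  rw [hfun]
  convert H using 1
  simp [dotProduct, Matrix.mulVec, Finset.sum_add_distrib]

lemma K_lb (η K₀ : ℝ) (K : ℝ → ℝ) (hKdiff : Differentiable ℝ K)
    (hK0 : K₀ ≤ K 0) (u : ℝ → Fin 3 → ℝ)
    (hKlaw : ∀ t, 0 ≤ t → deriv K t = η * (norm2 (u t) - K t + K₀))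
    (hη : 0 < η) :
    ∀ t, 0 ≤ t → K₀ ≤ K t := by
  intro t ht
  set g : ℝ → ℝ := fun τ => (K τ - K₀) * Real.exp (η * τ) with hg
  have hgd : ∀ τ, HasDerivAt g
      (deriv K τ * Real.exp (η * τ) + (K τ - K₀) * (Real.exp (η * τ) * η)) τ := by
    intro τ
    have h1 : HasDerivAt (fun τ => K τ - K₀) (deriv K τ) τ :=
      ((hKdiff τ).hasDerivAt).sub_const _
    have h2 : HasDerivAt (fun τ => Real.exp (η * τ)) (Real.exp (η * τ) * η) τ := by
      have := (Real.hasDerivAt_exp (η * τ)).comp τ ((hasDerivAt_id τ).const_mul η)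
      simp at this; exact this
    exact h1.mul h2
  have mono : MonotoneOn g (Set.Ici (0:ℝ)) := by
    apply monotoneOn_of_deriv_nonneg (convex_Ici 0)
    · exact (Continuous.mul (by have := hKdiff.continuous; fun_prop) (by fun_prop)).continuousOn
    · intro τ _
      exact (hgd τ).differentiableAt.differentiableWithinAt
    · intro τ hτ
      rw [interior_Ici] at hτ
      rw [(hgd τ).deriv, hKlaw τ (le_of_lt hτ)]
      have h3 : η * (norm2 (u τ) - K τ + K₀) * Real.exp (η * τ)
          + (K τ - K₀) * (Real.exp (η * τ) * η) = η * norm2 (u τ) * Real.exp (η * τ) := by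
        ring
      rw [h3]
      have := norm2_nonneg (u τ)
      positivity
  have h0t := mono Set.self_mem_Ici (Set.mem_Ici.2 ht) ht
  simp only [hg, mul_zero, Real.exp_zero, mul_one] at h0t
  nlinarith [Real.exp_pos (η * t), h0t, hK0]

lemma sqrt_add_le' (p q : ℝ) (hp : 0 ≤ p) (hq : 0 ≤ q) :
    Real.sqrt (p + q) ≤ Real.sqrt p + Real.sqrt q := by
  have h : p + q ≤ (Real.sqrt p + Real.sqrt q) ^ 2 := by
    nlinarith [Real.sq_sqrt hp, Real.sq_sqrt hq, Real.sqrt_nonneg p, Real.sqrt_nonneg q,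
      mul_nonneg (Real.sqrt_nonneg p) (Real.sqrt_nonneg q)]
  calc Real.sqrt (p + q) ≤ Real.sqrt ((Real.sqrt p + Real.sqrt q) ^ 2) := Real.sqrt_le_sqrt h
    _ = Real.sqrt p + Real.sqrt q :=
        Real.sqrt_sq (by positivity)

set_option maxHeartbeats 1000000 in
/-- Theorem 2 (ACS reaching condition): with the adaptive smooth control
`u = −(K/ε)s`, adaptation law `K' = η(‖u‖₂ − K + K₀)`, bounded disturbance,
`K ≤ K*` with `K* > D̄`, and `γ < η·K₀/(β_K + ε)`, the Lyapunov function
`V = ½ sᵀ J₀ s + (1/2γ)(K − K*)²` satisfies `V' < −β√V` whenever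
`‖s‖₂ > ε`, for some constant `β > 0`. -/
theorem acs_reaching_condition
    (ε η K₀ Dbar βK Kstar γ lmax : ℝ)
    (J₀ : Matrix (Fin 3) (Fin 3) ℝ) (hsymm : J₀.IsSymm) (hpd : J₀.PosDef)
    (hlmax : IsGreatest {μ : ℝ | Module.End.HasEigenvalue (Matrix.toLin' J₀) μ} lmax)
    (hε : 0 < ε) (hη : 0 < η) (hK₀ : 0 < K₀) (hD : 0 < Dbar) (hβK : 0 < βK)
    (hKs : Dbar < Kstar) (hγ : 0 < γ) (hγ2 : γ < η * K₀ / (βK + ε))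
    (d : ℝ → Fin 3 → ℝ) (hd : ∀ t, norm2 (d t) < Dbar)
    (K : ℝ → ℝ) (hKdiff : Differentiable ℝ K) (hK0 : K₀ ≤ K 0)
    (hKub : ∀ t, 0 ≤ t → K t ≤ Kstar)
    (s : ℝ → Fin 3 → ℝ) (hs : Differentiable ℝ s)
    (u : ℝ → Fin 3 → ℝ) (hu : ∀ t, u t = -(K t / ε) • s t)
    (hKlaw : ∀ t, 0 ≤ t → deriv K t = η * (norm2 (u t) - K t + K₀))
    (hsd : ∀ t, deriv s t = Matrix.mulVec J₀⁻¹ (u t) + lmax⁻¹ • d t) :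
    ∃ β > 0, ∀ t, 0 ≤ t → ε < norm2 (s t) →
      deriv (fun τ => (1 / 2 : ℝ) * dotProduct (s τ) (Matrix.mulVec J₀ (s τ))
          + (1 / (2 * γ)) * (K τ - Kstar) ^ 2) t
        < -β * Real.sqrt ((1 / 2 : ℝ) * dotProduct (s t) (Matrix.mulVec J₀ (s t))
              + (1 / (2 * γ)) * (K t - Kstar) ^ 2) := by
  have hl : 0 < lmax := lmax_pos J₀ hpd lmax hlmax
  set c1 : ℝ := Real.sqrt (lmax / 2) with hc1def
  set c2 : ℝ := Real.sqrt (1 / (2 * γ)) with hc2def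
  have hc1 : 0 < c1 := Real.sqrt_pos.2 (by linarith)
  have hc2 : 0 < c2 := Real.sqrt_pos.2 (by positivity)
  set β : ℝ := min ((Kstar - Dbar) / c1) (βK * Real.sqrt (2 * γ)) with hβdef
  have hβpos : 0 < β := lt_min (div_pos (by linarith) hc1) (by positivity)
  refine ⟨β, hβpos, ?_⟩
  intro t ht hst
  -- abbreviations
  set a : ℝ := norm2 (s t) with ha_def
  set k : ℝ := K t with hk_def
  have ha0 : (0:ℝ) ≤ a := norm2_nonneg _
  have haε : ε < a := hst
  have hKl : K₀ ≤ k := K_lb η K₀ K hKdiff hK0 u hKlaw hη t ht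
  have hKu : k ≤ Kstar := hKub t ht
  have hγ2' : γ * (βK + ε) < η * K₀ := by
    rw [lt_div_iff₀ (by positivity)] at hγ2
    linarith
  -- derivative of V
  have hKd : HasDerivAt (fun τ => (K τ - Kstar) ^ 2) (2 * (k - Kstar) * deriv K t) t := by
    have h := (((hKdiff t).hasDerivAt).sub_const Kstar).pow 2
    simp [hk_def] at h ⊢; exact h
  have hq := hasDerivAt_quad J₀ s hs t
  have hV : HasDerivAt (fun τ => (1 / 2 : ℝ) * dotProduct (s τ) (Matrix.mulVec J₀ (s τ))
      + (1 / (2 * γ)) * (K τ - Kstar) ^ 2)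
      ((1/2) * (dotProduct (deriv s t) (J₀.mulVec (s t))
        + dotProduct (s t) (J₀.mulVec (deriv s t)))
        + (1 / (2 * γ)) * (2 * (k - Kstar) * deriv K t)) t :=
    (hq.const_mul (1/2 : ℝ)).add (hKd.const_mul (1 / (2 * γ)))
  have hdV := hV.deriv
  have hsymmdot : dotProduct (deriv s t) (J₀.mulVec (s t))
      = dotProduct (s t) (J₀.mulVec (deriv s t)) := symm_dot J₀ hsymm _ _
  have hdet : IsUnit J₀.det := isUnit_iff_ne_zero.2 (ne_of_gt hpd.det_pos)
  have hJJ : J₀.mulVec (deriv s t) = u t + lmax⁻¹ • (J₀.mulVec (d t)) := by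
    rw [hsd t, Matrix.mulVec_add, Matrix.mulVec_smul, Matrix.mulVec_mulVec,
      Matrix.mul_nonsing_inv _ hdet, Matrix.one_mulVec]
  have hsu : dotProduct (s t) (u t) = -(k / ε) * a ^ 2 := by
    rw [hu t]
    have h1 : dotProduct (s t) ((-(k / ε)) • s t)
        = -(k / ε) * dotProduct (s t) (s t) := by
      simp [dotProduct_smul]
    rw [h1, ← sq_norm2]
  have hnu : norm2 (u t) = (k / ε) * a := by
    rw [hu t, norm2_smul, abs_neg, abs_of_nonneg (div_nonneg (by linarith) hε.le)]
  set X : ℝ := dotProduct (s t) (J₀.mulVec (d t)) with hXdef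
  have hXlt : lmax⁻¹ * X < Dbar * a := by
    have h1 : X ≤ lmax * (a * norm2 (d t)) := cross_le J₀ hsymm hpd lmax hlmax (s t) (d t)
    have hapos : 0 < a := lt_trans hε haε
    have h2 : lmax * (a * norm2 (d t)) < lmax * (a * Dbar) :=
      mul_lt_mul_of_pos_left (mul_lt_mul_of_pos_left (hd t) hapos) hl
    have h3 : lmax⁻¹ * X < lmax⁻¹ * (lmax * (a * Dbar)) :=
      mul_lt_mul_of_pos_left (lt_of_le_of_lt h1 h2) (inv_pos.2 hl)
    calc lmax⁻¹ * X < lmax⁻¹ * (lmax * (a * Dbar)) := h3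
      _ = Dbar * a := by field_simp
  have hdVval : deriv (fun τ => (1 / 2 : ℝ) * dotProduct (s τ) (Matrix.mulVec J₀ (s τ))
      + (1 / (2 * γ)) * (K τ - Kstar) ^ 2) t
      = -(k / ε) * a ^ 2 + lmax⁻¹ * X
        + (1 / γ) * (k - Kstar) * (η * ((k / ε) * a - k + K₀)) := by
    rw [hdV, hsymmdot, hJJ, dotProduct_add, dotProduct_smul, hsu,
      hKlaw t ht, hnu]
    simp only [smul_eq_mul, ← hXdef]
    field_simp
    ring
  -- bound on sqrt V
  set VT : ℝ := (1 / 2 : ℝ) * dotProduct (s t) (Matrix.mulVec J₀ (s t))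
      + (1 / (2 * γ)) * (k - Kstar) ^ 2 with hVTdef
  have hQle : dotProduct (s t) (J₀.mulVec (s t)) ≤ lmax * a ^ 2 := by
    have := quad_le J₀ hpd lmax hlmax (s t)
    rwa [← sq_norm2] at this
  have hks : (0:ℝ) ≤ Kstar - k := by linarith
  have hsqrtV : Real.sqrt VT ≤ c1 * a + c2 * (Kstar - k) := by
    have hVle : VT ≤ (lmax / 2) * a ^ 2 + (1 / (2 * γ)) * (Kstar - k) ^ 2 := by
      have he : (k - Kstar) ^ 2 = (Kstar - k) ^ 2 := by ring
      rw [hVTdef, he]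
      have h12 : (1/2:ℝ) * dotProduct (s t) (Matrix.mulVec J₀ (s t))
          ≤ (1/2) * (lmax * a ^ 2) := by linarith [hQle]
      linarith [h12]
    calc Real.sqrt VT ≤ Real.sqrt ((lmax / 2) * a ^ 2 + (1 / (2 * γ)) * (Kstar - k) ^ 2) :=
          Real.sqrt_le_sqrt hVle
      _ ≤ Real.sqrt ((lmax / 2) * a ^ 2) + Real.sqrt ((1 / (2 * γ)) * (Kstar - k) ^ 2) :=
          sqrt_add_le' _ _ (by positivity) (by positivity)
      _ = c1 * a + c2 * (Kstar - k) := by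
          rw [Real.sqrt_mul (by positivity : (0:ℝ) ≤ lmax / 2),
            Real.sqrt_mul (by positivity : (0:ℝ) ≤ 1 / (2 * γ)),
            Real.sqrt_sq ha0, Real.sqrt_sq hks]
  have hβ1 : β * c1 ≤ Kstar - Dbar := by
    have h1 : β ≤ (Kstar - Dbar) / c1 := min_le_left _ _
    rwa [le_div_iff₀ hc1] at h1
  have hβ2 : β * c2 ≤ βK := by
    have hβle : β ≤ βK * Real.sqrt (2 * γ) := min_le_right _ _
    have h2γ : Real.sqrt (2 * γ) * c2 = 1 := by
      rw [hc2def, ← Real.sqrt_mul (by positivity : (0:ℝ) ≤ 2 * γ), mul_one_div,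
        div_self (by positivity : (2*γ:ℝ) ≠ 0), Real.sqrt_one]
    calc β * c2 ≤ (βK * Real.sqrt (2 * γ)) * c2 := mul_le_mul_of_nonneg_right hβle hc2.le
      _ = βK * (Real.sqrt (2 * γ) * c2) := by ring
      _ = βK := by rw [h2γ, mul_one]
  have claim2 : β * Real.sqrt VT ≤ (Kstar - Dbar) * a + βK * (Kstar - k) := by
    have h1 : β * Real.sqrt VT ≤ β * (c1 * a + c2 * (Kstar - k)) :=
      mul_le_mul_of_nonneg_left hsqrtV hβpos.le
    nlinarith [mul_le_mul_of_nonneg_right hβ1 ha0, mul_le_mul_of_nonneg_right hβ2 hks]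
  have claim1 : (Kstar - Dbar) * a + βK * (Kstar - k)
      ≤ (k / ε) * a ^ 2 - Dbar * a - (1 / γ) * (k - Kstar) * (η * ((k / ε) * a - k + K₀)) := by
    have hpos : (0:ℝ) < γ * ε := by positivity
    rw [← mul_le_mul_iff_right₀ hpos]
    have hR : γ * ε * ((k / ε) * a ^ 2 - Dbar * a
          - (1 / γ) * (k - Kstar) * (η * ((k / ε) * a - k + K₀)))
        = γ * k * a ^ 2 - γ * ε * Dbar * a
          + η * ((Kstar - k) * (k * a - ε * k + ε * K₀)) := by
      field_simp
      ring
    rw [hR]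
    have n1 : 0 ≤ γ * k * ((a - ε) * a) :=
      mul_nonneg (mul_nonneg hγ.le (by linarith)) (mul_nonneg (by linarith) ha0)
    have n2 : 0 ≤ (η * k - γ * (βK + ε)) * ((Kstar - k) * (a - ε)) := by
      apply mul_nonneg
      · nlinarith [hγ2', hKl, hη.le]
      · exact mul_nonneg hks (by linarith)
    have n3 : 0 ≤ (η * K₀ - γ * (βK + ε)) * (ε * (Kstar - k)) :=
      mul_nonneg (by linarith) (mul_nonneg hε.le hks)
    have n4 : 0 ≤ γ * βK * ((Kstar - k) * (a - ε)) :=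
      mul_nonneg (by positivity) (mul_nonneg hks (by linarith))
    have iden : γ * k * a ^ 2 - γ * ε * Dbar * a
          + η * ((Kstar - k) * (k * a - ε * k + ε * K₀))
          - γ * ε * ((Kstar - Dbar) * a + βK * (Kstar - k))
        = γ * k * ((a - ε) * a) + (η * k - γ * (βK + ε)) * ((Kstar - k) * (a - ε))
          + (η * K₀ - γ * (βK + ε)) * (ε * (Kstar - k))
          + γ * βK * ((Kstar - k) * (a - ε)) := by ring
    linarith [n1, n2, n3, n4, iden]
  rw [hdVval]
  have : -β * Real.sqrt VT = -(β * Real.sqrt VT) := by ring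
  rw [this]
  linarith [hXlt, claim1, claim2]
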